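/- arXiv:2510.14762 — 3 statements merged into one kernel-verified Lean document; each statement's English description precedes it below -/
import Mathlib

section
/- Let G be a subcubic graph with no isolated vertices and let X be a proper subset of the vertex set V(G). Then Φ_G(X) = ξ_G(X) + 2·n_0(G − X); that is, the total increase of vertex weights caused by deleting X equals the number of X-exit edges plus twice the number of isolated vertices of G − X. -/
namespace PaperIndepDom

open SimpleGraph

/-- The degree of a vertex `v` in a graph `G`. -/
noncomputable def deg {V : Type*} (G : SimpleGraph V) (v : V) : ℕ :=
  (G.neighborSet v).ncard

/-- The weight `w_G(v)` of a vertex: `8`, `5`, `4` or `3` according as `deg G v` is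
`0`, `1`, `2` or (at least) `3`. -/
noncomputable def vWeight {V : Type*} (G : SimpleGraph V) (v : V) : ℤ :=
  if deg G v = 0 then 8 else if deg G v = 1 then 5 else if deg G v = 2 then 4 else 3

/-- The set of `X`-exit edges of `G` : edges joining a vertex of `X` to a vertex
outside `X`. -/
def exitEdges {V : Type*} (G : SimpleGraph V) (X : Set V) : Set (Sym2 V) :=
  {e | e ∈ G.edgeSet ∧ ∃ a b, a ∈ X ∧ b ∉ X ∧ e = s(a, b)}

/-- Arithmetic core: the weight increase of a single vertex with `a` deleted neighbors
and `b` remaining neighbors. -/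
lemma weightStep (a b : ℕ) (h3 : a + b ≤ 3) (h0 : a + b ≠ 0) :
    ((if b = 0 then (8:ℤ) else if b = 1 then 5 else if b = 2 then 4 else 3)
      - (if a + b = 0 then (8:ℤ) else if a + b = 1 then 5 else if a + b = 2 then 4 else 3))
    = (a : ℤ) + 2 * (if b = 0 then 1 else 0) := by
  split_ifs <;> omega

/-- The degree of a vertex in an induced subgraph, as a count in the ambient graph. -/
lemma degInduce {V : Type} (G : SimpleGraph V) (s : Set V) (a : s) :
    deg (G.induce s) a = (G.neighborSet ↑a ∩ s).ncard := by
  have h : (G.induce s).neighborSet a = Subtype.val ⁻¹' (G.neighborSet ↑a) := by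
    ext b; simp [induce, neighborSet]
  rw [deg, h, ← Set.ncard_image_of_injOn (f := Subtype.val) Subtype.val_injective.injOn,
    Set.image_preimage_eq_inter_range, Subtype.range_coe]

/-- Splitting the degree of a vertex according to a set `X`. -/
lemma degSplit {V : Type} [Fintype V] (G : SimpleGraph V) (X : Set V) (v : V) :
    deg G v = (G.neighborSet v ∩ X).ncard + (G.neighborSet v ∩ Xᶜ).ncard := by
  classical
  rw [deg, ← Set.ncard_union_eq (by
      exact Set.disjoint_of_subset Set.inter_subset_right Set.inter_subset_right
        disjoint_compl_right)
      (Set.toFinite _) (Set.toFinite _), ← Set.inter_union_distrib_left, Set.union_compl_self,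
    Set.inter_univ]

open scoped Classical in
/-- Double counting: summing, over the vertices outside `X`, the number of their
neighbors inside `X`, counts exactly the `X`-exit edges. -/
lemma countExit {V : Type} [Fintype V] (G : SimpleGraph V) (X : Set V) :
    ∑ v ∈ Xᶜ.toFinset, (G.neighborSet v ∩ X).ncard = (exitEdges G X).ncard := by
  classical
  set F : V → Finset (Sym2 V) := fun v => (G.neighborSet v ∩ X).toFinset.image (fun a => s(v, a))
    with hF
  have hcard : ∀ v, (F v).card = (G.neighborSet v ∩ X).ncard := by
    intro v
    rw [hF, Finset.card_image_of_injective _ (fun a a' h => (Sym2.congr_right).1 h),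
      Set.ncard_eq_toFinset_card']
  have hdisj : ∀ v ∈ Xᶜ.toFinset, ∀ w ∈ Xᶜ.toFinset, v ≠ w → Disjoint (F v) (F w) := by
    intro v hv w hw hvw
    simp only [Set.mem_toFinset, Set.mem_compl_iff] at hv hw
    rw [Finset.disjoint_left]
    intro e he he'
    simp only [hF, Finset.mem_image, Set.mem_toFinset, Set.mem_inter_iff, mem_neighborSet]
      at he he'
    obtain ⟨a, ⟨-, haX⟩, rfl⟩ := he
    obtain ⟨a', ⟨-, haX'⟩, heq⟩ := he'
    rw [Sym2.eq_iff] at heq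
    rcases heq with ⟨h1, h2⟩ | ⟨h1, h2⟩
    · exact hvw h1.symm
    · exact hw (h1 ▸ haX)
  have hunion : (exitEdges G X).toFinset = Xᶜ.toFinset.biUnion F := by
    ext e
    rw [Set.mem_toFinset]
    simp only [Set.mem_toFinset, Finset.mem_biUnion, Set.mem_compl_iff, hF, Finset.mem_image,
      Set.mem_toFinset, Set.mem_inter_iff, mem_neighborSet, exitEdges, Set.mem_setOf_eq]
    constructor
    · rintro ⟨hE, a, b, haX, hbX, rfl⟩
      exact ⟨b, hbX, a, ⟨((mem_edgeSet G).1 hE).symm, haX⟩, Sym2.eq_swap⟩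
    · rintro ⟨v, hv, a, ⟨hadj, haX⟩, rfl⟩
      exact ⟨(mem_edgeSet G).2 hadj, a, v, haX, hv, Sym2.eq_swap⟩
  rw [Set.ncard_eq_toFinset_card' (exitEdges G X), hunion, Finset.card_biUnion hdisj]
  exact Finset.sum_congr rfl (fun v _ => (hcard v).symm)

/-- Let `G` be a subcubic graph with no isolated vertices and let `X` be
a proper subset of the vertex set. Then `Φ_G(X) = ξ_G(X) + 2·n₀(G − X)`: the total
increase of vertex weights caused by deleting `X` equals the number of `X`-exit edges
plus twice the number of isolated vertices of `G − X`. -/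
theorem statement6 {V : Type} [Fintype V] (G : SimpleGraph V)
    (hsub : ∀ v : V, deg G v ≤ 3) (hnoiso : ∀ v : V, deg G v ≠ 0)
    (X : Set V) (hX : X ≠ Set.univ) :
    (∑ᶠ v : ↥(Xᶜ), (vWeight (G.induce Xᶜ) v - vWeight G (v : V)))
      = ((exitEdges G X).ncard : ℤ)
        + 2 * ({v : ↥(Xᶜ) | deg (G.induce Xᶜ) v = 0}.ncard : ℤ) := by
  classical
  have hpoint : ∀ v : ↥(Xᶜ),
      vWeight (G.induce Xᶜ) v - vWeight G (v : V)
        = ((G.neighborSet ↑v ∩ X).ncard : ℤ)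
          + 2 * (if deg (G.induce Xᶜ) v = 0 then 1 else 0) := by
    intro v
    have hb : deg (G.induce Xᶜ) v = (G.neighborSet ↑v ∩ Xᶜ).ncard := degInduce G Xᶜ v
    have hd : deg G ↑v = (G.neighborSet ↑v ∩ X).ncard + (G.neighborSet ↑v ∩ Xᶜ).ncard :=
      degSplit G X ↑v
    rw [vWeight, vWeight, hb, hd]
    exact weightStep _ _ (hd ▸ hsub ↑v) (hd ▸ hnoiso ↑v)
  rw [finsum_eq_sum_of_fintype, Finset.sum_congr rfl (fun v _ => hpoint v), Finset.sum_add_distrib,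
    ← Finset.mul_sum, Finset.sum_boole]
  have h1 : ∑ v : ↥(Xᶜ), ((G.neighborSet ↑v ∩ X).ncard : ℤ) = ((exitEdges G X).ncard : ℤ) := by
    rw [Finset.sum_set_coe (f := fun v => ((G.neighborSet v ∩ X).ncard : ℤ)), ← countExit G X]
    push_cast
    rfl
  have h2 : (Finset.filter (fun v : ↥(Xᶜ) => deg (G.induce Xᶜ) v = 0) Finset.univ).card
      = {v : ↥(Xᶜ) | deg (G.induce Xᶜ) v = 0}.ncard := by
    rw [Set.ncard_eq_toFinset_card', Set.toFinset_setOf]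
  rw [h1, h2]

end PaperIndepDom
end

section
/- Let G' be a subcubic graph with no isolated vertices, let v' be a vertex of degree at most 2 in G', and let G be the subcubic graph obtained from G' by adding a vertex-disjoint copy of K_{2,3} and adding an edge joining v' to a vertex of degree 2 in the added copy of K_{2,3}. Then i(G) = i(G') + 2. -/
namespace PaperIndepDom

open SimpleGraph

/-- A set `S` is an independent dominating set of `G`. -/
def IsIDSet {V : Type*} (G : SimpleGraph V) (S : Set V) : Prop :=
  (∀ u ∈ S, ∀ v ∈ S, ¬ G.Adj u v) ∧ ∀ v, v ∉ S → ∃ u ∈ S, G.Adj u v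

/-- The independent domination number `i(G)`. -/
noncomputable def iNum {V : Type*} (G : SimpleGraph V) : ℕ :=
  sInf {n | ∃ S : Set V, IsIDSet G S ∧ S.ncard = n}

/-- The graph obtained from `G` by adding a vertex-disjoint copy of `K_{2,3}`
(on the vertex set `Fin 2 ⊕ Fin 3`) together with an edge joining the vertex `v'` of `G`
to the degree-2 vertex `Sum.inr t` of the added copy of `K_{2,3}`. -/
def addK23 {V : Type*} (G : SimpleGraph V) (v' : V) (t : Fin 3) :
    SimpleGraph (V ⊕ (Fin 2 ⊕ Fin 3)) :=
  SimpleGraph.fromRel (fun x y =>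
    (∃ a b, G.Adj a b ∧ x = Sum.inl a ∧ y = Sum.inl b) ∨
    (∃ i j, x = Sum.inr (Sum.inl i) ∧ y = Sum.inr (Sum.inr j)) ∨
    (x = Sum.inl v' ∧ y = Sum.inr (Sum.inr t)))

section Adj
variable {V : Type*} (G : SimpleGraph V) (v' : V) (t : Fin 3)

lemma adj_ll {a b : V} : (addK23 G v' t).Adj (.inl a) (.inl b) ↔ G.Adj a b := by
  simp only [addK23, fromRel_adj]
  constructor
  · rintro ⟨hne, h | h⟩ <;>
      rcases h with ⟨x, y, hxy, hx, hy⟩ | ⟨i, j, hx, hy⟩ | ⟨hx, hy⟩ <;>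
      simp_all <;> exact SimpleGraph.Adj.symm (by assumption)
  · intro h
    exact ⟨by simp [h.ne], Or.inl (Or.inl ⟨a, b, h, rfl, rfl⟩)⟩

lemma adj_la {a : V} {i : Fin 2} : ¬ (addK23 G v' t).Adj (.inl a) (.inr (.inl i)) := by
  simp only [addK23, fromRel_adj]
  rintro ⟨hne, h | h⟩ <;> simp_all

lemma adj_lb {a : V} {j : Fin 3} :
    (addK23 G v' t).Adj (.inl a) (.inr (.inr j)) ↔ a = v' ∧ j = t := by
  simp only [addK23, fromRel_adj]
  constructor
  · rintro ⟨hne, h | h⟩ <;> simp_all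
  · rintro ⟨rfl, rfl⟩
    exact ⟨by simp, Or.inl (Or.inr (Or.inr ⟨rfl, rfl⟩))⟩

lemma adj_ab {i : Fin 2} {j : Fin 3} :
    (addK23 G v' t).Adj (.inr (.inl i)) (.inr (.inr j)) := by
  simp only [addK23, fromRel_adj]
  exact ⟨by simp, Or.inl (Or.inr (Or.inl ⟨i, j, rfl, rfl⟩))⟩

lemma adj_aa {i i' : Fin 2} : ¬ (addK23 G v' t).Adj (.inr (.inl i)) (.inr (.inl i')) := by
  simp only [addK23, fromRel_adj]
  rintro ⟨hne, h | h⟩ <;> simp_all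

lemma adj_bb {j j' : Fin 3} : ¬ (addK23 G v' t).Adj (.inr (.inr j)) (.inr (.inr j')) := by
  simp only [addK23, fromRel_adj]
  rintro ⟨hne, h | h⟩ <;> simp_all

end Adj

lemma exists_isIDSet {V : Type*} [Fintype V] (G : SimpleGraph V) :
    ∃ S : Set V, IsIDSet G S := by
  classical
  set 𝒮 : Set (Finset V) := {s | ∀ u ∈ s, ∀ v ∈ s, ¬ G.Adj u v} with h𝒮
  obtain ⟨s, hs, hmax⟩ := Set.Finite.exists_maximalFor Finset.card 𝒮 (Set.toFinite _)
    ⟨∅, by simp [h𝒮]⟩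
  refine ⟨↑s, fun u hu v hv => hs u hu v hv, fun v hv => ?_⟩
  by_contra hno
  push_neg at hno
  have hvs : v ∉ s := by simpa using hv
  have hmem : insert v s ∈ 𝒮 := by
    intro a ha b hb
    rcases Finset.mem_insert.1 ha with rfl | ha'
    · rcases Finset.mem_insert.1 hb with rfl | hb'
      · exact G.loopless.irrefl _
      · exact fun h => hno _ (Finset.mem_coe.2 hb') h.symm
    · rcases Finset.mem_insert.1 hb with rfl | hb'
      · exact fun h => hno _ (Finset.mem_coe.2 ha') h
      · exact hs _ ha' _ hb'
  have := hmax hmem (by simp [Finset.card_insert_of_notMem hvs])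
  simp [Finset.card_insert_of_notMem hvs] at this

lemma iNum_le {V : Type*} (G : SimpleGraph V) {S : Set V} (h : IsIDSet G S) :
    iNum G ≤ S.ncard :=
  Nat.sInf_le ⟨S, h, rfl⟩

/-- **Lemma 1(a).** If `G'` is an isolate-free subcubic graph, `v'` is a
vertex of degree at most `2` in `G'`, and `G` arises from `G'` by adding a disjoint copy
of `K_{2,3}` and an edge joining `v'` to a degree-2 vertex of that copy, then
`i(G) = i(G') + 2`. -/
theorem statement7 {V : Type} [Fintype V] (G' : SimpleGraph V)
    (hsub : ∀ v : V, deg G' v ≤ 3) (hnoiso : ∀ v : V, deg G' v ≠ 0)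
    (v' : V) (hv' : deg G' v' ≤ 2) (t : Fin 3)
    (G : SimpleGraph (V ⊕ (Fin 2 ⊕ Fin 3))) (hG : G = addK23 G' v' t) :
    iNum G = iNum G' + 2 := by
  classical
  subst hG
  set H := addK23 G' v' t with hH
  -- Fin 3 facts
  have hfin : (t + 1 ≠ t) ∧ (t + 2 ≠ t) ∧ (t + 1 ≠ t + 2) := by fin_cases t <;> decide
  obtain ⟨ht1, ht2, ht12⟩ := hfin
  apply le_antisymm
  · -- upper bound
    have hne' : {n | ∃ S : Set V, IsIDSet G' S ∧ S.ncard = n}.Nonempty := by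
      obtain ⟨S, hS⟩ := exists_isIDSet G'
      exact ⟨_, S, hS, rfl⟩
    obtain ⟨S', hS', hc'⟩ := Nat.sInf_mem hne'
    set P : Set (V ⊕ (Fin 2 ⊕ Fin 3)) :=
      {Sum.inr (Sum.inl 0), Sum.inr (Sum.inl 1)} with hP
    set T : Set (V ⊕ (Fin 2 ⊕ Fin 3)) := (Sum.inl '' S') ∪ P with hT
    have hPmem : ∀ x ∈ P, ∃ i : Fin 2, x = Sum.inr (Sum.inl i) := by
      intro x hx
      rcases hx with rfl | rfl
      exacts [⟨0, rfl⟩, ⟨1, rfl⟩]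
    have hTid : IsIDSet H T := by
      constructor
      · intro u hu v hv hadj
        rcases hu with ⟨a, ha, rfl⟩ | hu
        · rcases hv with ⟨b, hb, rfl⟩ | hv
          · exact hS'.1 a ha b hb ((adj_ll G' v' t).1 hadj)
          · obtain ⟨i, rfl⟩ := hPmem _ hv
            exact adj_la G' v' t hadj
        · obtain ⟨i, rfl⟩ := hPmem _ hu
          rcases hv with ⟨b, hb, rfl⟩ | hv
          · exact adj_la G' v' t hadj.symm
          · obtain ⟨i', rfl⟩ := hPmem _ hv
            exact adj_aa G' v' t hadj
      · intro x hx
        rcases x with u | w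
        · have hu : u ∉ S' := fun h => hx (Or.inl ⟨u, h, rfl⟩)
          obtain ⟨w, hw, hadj⟩ := hS'.2 u hu
          exact ⟨Sum.inl w, Or.inl ⟨w, hw, rfl⟩, (adj_ll G' v' t).2 hadj⟩
        · rcases w with i | j
          · exfalso
            apply hx
            right
            fin_cases i
            · exact Or.inl rfl
            · exact Or.inr rfl
          · exact ⟨Sum.inr (Sum.inl 0), Or.inr (Or.inl rfl), adj_ab G' v' t⟩
    have hcard : T.ncard = S'.ncard + 2 := by
      have hdisj : Disjoint (Sum.inl '' S' : Set (V ⊕ (Fin 2 ⊕ Fin 3))) P := by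
        rw [Set.disjoint_left]
        rintro x ⟨a, _, rfl⟩ hxP
        obtain ⟨i, hi⟩ := hPmem _ hxP
        simp at hi
      rw [hT, Set.ncard_union_eq hdisj (Set.toFinite _) (Set.toFinite _),
        Set.ncard_image_of_injective _ Sum.inl_injective]
      congr 1
      rw [hP]
      exact Set.ncard_pair (by simp)
    calc iNum H ≤ T.ncard := iNum_le H hTid
    _ = iNum G' + 2 := by rw [hcard, hc']; rfl
  · -- lower bound
    have hne : {n | ∃ S : Set (V ⊕ (Fin 2 ⊕ Fin 3)), IsIDSet H S ∧ S.ncard = n}.Nonempty := by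
      obtain ⟨S, hS⟩ := exists_isIDSet H
      exact ⟨_, S, hS, rfl⟩
    obtain ⟨S, hS, hc⟩ := Nat.sInf_mem hne
    rw [show sInf _ = iNum H from rfl] at hc
    set T : Set V := {v | Sum.inl v ∈ S} with hTdef
    set R : Set (Fin 2 ⊕ Fin 3) := {w | Sum.inr w ∈ S} with hRdef
    have hdecomp : S = Sum.inl '' T ∪ Sum.inr '' R := by
      ext x
      rcases x with u | w <;> simp [hTdef, hRdef]
    have hcount : S.ncard = T.ncard + R.ncard := by
      rw [hdecomp, Set.ncard_union_eq (by
          rw [Set.disjoint_left]; rintro x ⟨a, _, rfl⟩ ⟨b, _, h⟩; simp at h)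
        (Set.toFinite _) (Set.toFinite _),
        Set.ncard_image_of_injective _ Sum.inl_injective,
        Set.ncard_image_of_injective _ Sum.inr_injective]
    have hTindep : ∀ u ∈ T, ∀ v ∈ T, ¬ G'.Adj u v := by
      intro u hu v hv h
      exact hS.1 _ hu _ hv ((adj_ll G' v' t).2 h)
    rw [← hc, hcount]
    by_cases hA : ∃ i : Fin 2, Sum.inr (Sum.inl i) ∈ S
    · -- case: some A-vertex in S; then both are, no B-vertex is
      obtain ⟨i0, hi0⟩ := hA
      have hAll : ∀ i : Fin 2, Sum.inr (Sum.inl i) ∈ S := by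
        intro i
        by_contra h
        obtain ⟨u, hu, hadj⟩ := hS.2 _ h
        rcases u with a | (i2 | j)
        · exact adj_la G' v' t hadj
        · exact adj_aa G' v' t hadj
        · exact hS.1 _ hu _ hi0 (adj_ab G' v' t).symm
      have hB : ∀ j : Fin 3, Sum.inr (Sum.inr j) ∉ S := by
        intro j hj
        exact hS.1 _ (hAll 0) _ hj (adj_ab G' v' t)
      have hTid : IsIDSet G' T := by
        refine ⟨hTindep, fun v hv => ?_⟩
        obtain ⟨u, hu, hadj⟩ := hS.2 (Sum.inl v) hv
        rcases u with w | (i | j)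
        · exact ⟨w, hu, (adj_ll G' v' t).1 hadj⟩
        · exact absurd hadj.symm (adj_la G' v' t)
        · exact absurd hu (hB j)
      have hR : R = {Sum.inl 0, Sum.inl 1} := by
        ext w
        rcases w with i | j
        · simp only [hRdef, Set.mem_setOf_eq, Set.mem_insert_iff, Set.mem_singleton_iff]
          constructor
          · intro _
            fin_cases i
            · exact Or.inl rfl
            · exact Or.inr rfl
          · intro _
            exact hAll i
        · simp only [hRdef, Set.mem_setOf_eq, Set.mem_insert_iff, Set.mem_singleton_iff]
          constructor
          · intro h
            exact absurd h (hB j)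
          · rintro (h | h) <;> exact absurd h (by simp)
      have hRcard : R.ncard = 2 := by
        rw [hR]
        exact Set.ncard_pair (by simp)
      have := iNum_le G' hTid
      omega
    · push_neg at hA
      have hBj : ∀ j : Fin 3, j ≠ t → Sum.inr (Sum.inr j) ∈ S := by
        intro j hj
        by_contra h
        obtain ⟨u, hu, hadj⟩ := hS.2 _ h
        rcases u with a | (i | j')
        · obtain ⟨rfl, rfl⟩ := (adj_lb G' v' t).1 hadj
          exact hj rfl
        · exact hA i hu
        · exact adj_bb G' v' t hadj
      have hpairsub : ({Sum.inr (t+1), Sum.inr (t+2)} : Set (Fin 2 ⊕ Fin 3)) ⊆ R := by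
        rintro x (rfl | rfl)
        · exact hBj (t+1) ht1
        · exact hBj (t+2) ht2
      have hR2 : 2 ≤ R.ncard := by
        have h2 : ({Sum.inr (t+1), Sum.inr (t+2)} : Set (Fin 2 ⊕ Fin 3)).ncard = 2 :=
          Set.ncard_pair (by simpa using ht12)
        calc 2 = _ := h2.symm
        _ ≤ R.ncard := Set.ncard_le_ncard hpairsub (Set.toFinite _)
      by_cases hbt : Sum.inr (Sum.inr t) ∈ S
      · -- B-vertex t in S
        have hR3 : 3 ≤ R.ncard := by
          have hsub3 : ({Sum.inr t, Sum.inr (t+1), Sum.inr (t+2)} : Set (Fin 2 ⊕ Fin 3)) ⊆ R := by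
            rintro x (rfl | rfl | rfl)
            · exact hbt
            · exact hBj (t+1) ht1
            · exact hBj (t+2) ht2
          have h3 : ({Sum.inr t, Sum.inr (t+1), Sum.inr (t+2)} : Set (Fin 2 ⊕ Fin 3)).ncard = 3 := by
            rw [Set.ncard_insert_of_notMem (by simp [ht1.symm, ht2.symm] : _ ∉ _)
              (Set.toFinite _), Set.ncard_pair (by simpa using ht12)]
          calc 3 = _ := h3.symm
          _ ≤ R.ncard := Set.ncard_le_ncard hsub3 (Set.toFinite _)
        have hv'T : v' ∉ T := by
          intro h
          exact hS.1 _ h _ hbt ((adj_lb G' v' t).2 ⟨rfl, rfl⟩)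
        by_cases hdom : ∃ w ∈ T, G'.Adj w v'
        · have hTid : IsIDSet G' T := by
            refine ⟨hTindep, fun v hv => ?_⟩
            by_cases hvv' : v = v'
            · subst hvv'; exact hdom
            · obtain ⟨u, hu, hadj⟩ := hS.2 (Sum.inl v) hv
              rcases u with w | (i | j)
              · exact ⟨w, hu, (adj_ll G' v' t).1 hadj⟩
              · exact absurd hadj.symm (adj_la G' v' t)
              · exact absurd ((adj_lb G' v' t).1 hadj.symm).1 hvv'
          have := iNum_le G' hTid
          omega
        · push_neg at hdom
          have hTid : IsIDSet G' (insert v' T) := by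
            constructor
            · intro u hu v hv hadj
              rcases Set.mem_insert_iff.1 hu with rfl | hu'
              · rcases Set.mem_insert_iff.1 hv with rfl | hv'
                · exact G'.loopless.irrefl _ hadj
                · exact hdom _ hv' hadj.symm
              · rcases Set.mem_insert_iff.1 hv with rfl | hv'
                · exact hdom _ hu' hadj
                · exact hTindep _ hu' _ hv' hadj
            · intro v hv
              have hvv' : v ≠ v' := fun h => hv (h ▸ Set.mem_insert _ _)
              have hvT : v ∉ T := fun h => hv (Set.mem_insert_of_mem _ h)
              obtain ⟨u, hu, hadj⟩ := hS.2 (Sum.inl v) hvT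
              rcases u with w | (i | j)
              · exact ⟨w, Set.mem_insert_of_mem _ hu, (adj_ll G' v' t).1 hadj⟩
              · exact absurd hadj.symm (adj_la G' v' t)
              · exact absurd ((adj_lb G' v' t).1 hadj.symm).1 hvv'
          have h1 := iNum_le G' hTid
          have h2 : (insert v' T).ncard ≤ T.ncard + 1 := Set.ncard_insert_le _ _
          omega
      · -- B-vertex t not in S; then v' ∈ T
        have hv'T : v' ∈ T := by
          obtain ⟨u, hu, hadj⟩ := hS.2 _ hbt
          rcases u with a | (i | j)
          · exact ((adj_lb G' v' t).1 hadj).1 ▸ hu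
          · exact absurd hu (hA i)
          · exact absurd hadj (adj_bb G' v' t)
        have hTid : IsIDSet G' T := by
          refine ⟨hTindep, fun v hv => ?_⟩
          obtain ⟨u, hu, hadj⟩ := hS.2 (Sum.inl v) hv
          rcases u with w | (i | j)
          · exact ⟨w, hu, (adj_ll G' v' t).1 hadj⟩
          · exact absurd hadj.symm (adj_la G' v' t)
          · exact absurd (((adj_lb G' v' t).1 hadj.symm).1 ▸ hv'T) hv
        have := iNum_le G' hTid
        omega


end PaperIndepDom
end

section
/- If G is a graph in the family 𝓑 that is constructed from the base graph by k − 1 applications of the operation O_1 (where k ≥ 1), then i(G) = 2k + 1, w(G) = 16k + 6, and consequently 8·i(G) = w(G) + 2. -/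
namespace PaperIndepDom

open SimpleGraph

/-- The number `n_j(G)` of vertices of degree `j` in `G`. -/
noncomputable def nDeg {V : Type*} (G : SimpleGraph V) (j : ℕ) : ℕ :=
  {v | deg G v = j}.ncard

/-- The vertex weight `w(G) = 8·n₀(G) + 5·n₁(G) + 4·n₂(G) + 3·n₃(G)`. -/
noncomputable def weight {V : Type*} (G : SimpleGraph V) : ℕ :=
  8 * nDeg G 0 + 5 * nDeg G 1 + 4 * nDeg G 2 + 3 * nDeg G 3

/-- The base graph `B₁`: a copy of `K_{2,3}` (vertices `0, 1` forming the partite set of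
size 2, vertices `2, 3, 4` forming the partite set of size 3) together with a new root
vertex `5` joined to the degree-2 vertex `2`. -/
def baseGraph : SimpleGraph (Fin 6) :=
  SimpleGraph.fromRel (fun i j =>
    (i.val ≤ 1 ∧ 2 ≤ j.val ∧ j.val ≤ 4) ∨ (i = 2 ∧ j = 5))

/-- `FamilyBk k G` means that `G` belongs to the family `𝓑` and is obtained (up to
isomorphism) from the base graph by `k − 1` applications of the operation `O₁`;
equivalently, `G ∈ 𝓑` contains exactly `k` vertex-disjoint copies of `K_{2,3}`. -/
inductive FamilyBk : ℕ → ∀ {V : Type}, SimpleGraph V → Prop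
  | base : FamilyBk 1 baseGraph
  | extend {k : ℕ} {V : Type} {G : SimpleGraph V} (hG : FamilyBk k G) (v' : V)
      (hv' : deg G v' ≤ 2) (t : Fin 3) : FamilyBk (k + 1) (addK23 G v' t)
  | iso {k : ℕ} {V W : Type} {G : SimpleGraph V} {H : SimpleGraph W}
      (e : G ≃g H) (hG : FamilyBk k G) : FamilyBk k H


section Aux

variable {V W : Type*} {G : SimpleGraph V} {H : SimpleGraph W}

lemma deg_iso (e : G ≃g H) (v : V) : deg H (e v) = deg G v := by
  unfold deg
  rw [← Nat.card_coe_set_eq, ← Nat.card_coe_set_eq]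
  exact Nat.card_congr (e.mapNeighborSet v).symm

lemma isIDSet_image (e : G ≃g H) {S : Set V} (hS : IsIDSet G S) :
    IsIDSet H (e '' S) := by
  obtain ⟨h1, h2⟩ := hS
  constructor
  · rintro _ ⟨u, hu, rfl⟩ _ ⟨v, hv, rfl⟩
    rw [e.map_adj_iff]; exact h1 u hu v hv
  · intro w hw
    obtain ⟨u, hu, hadj⟩ := h2 (e.symm w) (fun h => hw ⟨_, h, by simp⟩)
    exact ⟨e u, ⟨u, hu, rfl⟩, by simpa using e.map_adj_iff.2 hadj⟩

lemma iNum_iso (e : G ≃g H) : iNum H = iNum G := by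
  unfold iNum
  congr 1
  ext n
  constructor
  · rintro ⟨S, hS, rfl⟩
    exact ⟨e.symm '' S, isIDSet_image e.symm hS,
      (Set.ncard_image_of_injective _ e.symm.injective).symm ▸ rfl⟩
  · rintro ⟨S, hS, rfl⟩
    exact ⟨e '' S, isIDSet_image e hS,
      Set.ncard_image_of_injective _ e.injective⟩

lemma nDeg_iso (e : G ≃g H) (j : ℕ) : nDeg H j = nDeg G j := by
  unfold nDeg
  have : {w | deg H w = j} = e '' {v | deg G v = j} := by
    ext w
    simp only [Set.mem_image, Set.mem_setOf_eq]
    constructor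
    · intro h; exact ⟨e.symm w, by rw [← deg_iso e (e.symm w)] at *; simpa using h, by simp⟩
    · rintro ⟨v, hv, rfl⟩; rw [deg_iso e]; exact hv
  rw [this, Set.ncard_image_of_injective _ e.injective]

lemma weight_iso (e : G ≃g H) : weight H = weight G := by
  unfold weight; rw [nDeg_iso e, nDeg_iso e, nDeg_iso e, nDeg_iso e]

lemma exists_IDS {V : Type*} [Finite V] (G : SimpleGraph V) : ∃ S : Set V, IsIDSet G S := by
  classical
  cases nonempty_fintype V
  have hne : (Finset.univ.powerset.filter
      (fun F : Finset V => ∀ u ∈ F, ∀ v ∈ F, ¬ G.Adj u v)).Nonempty :=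
    ⟨∅, by simp⟩
  obtain ⟨F, hF, hmax⟩ := Finset.exists_max_image _ (fun F => F.card) hne
  simp only [Finset.mem_filter, Finset.mem_powerset] at hF
  refine ⟨↑F, ⟨fun u hu v hv => hF.2 u hu v hv, ?_⟩⟩
  intro v hv
  by_contra hcon
  push_neg at hcon
  have hind : ∀ u ∈ insert v F, ∀ w ∈ insert v F, ¬ G.Adj u w := by
    intro u hu w hw h
    rcases Finset.mem_insert.1 hu with h1 | h1 <;> rcases Finset.mem_insert.1 hw with h2 | h2
    · subst h1; subst h2; exact G.irrefl h
    · subst h1; exact hcon w (Finset.mem_coe.2 h2) (G.adj_symm h)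
    · subst h2; exact hcon u (Finset.mem_coe.2 h1) h
    · exact hF.2 u h1 w h2 h
  have := hmax (insert v F) (by
    simp only [Finset.mem_filter, Finset.mem_powerset]
    exact ⟨Finset.subset_univ _, hind⟩)
  rw [Finset.card_insert_of_notMem (by simpa using hv)] at this
  omega

lemma setIDS_nonempty {V : Type*} [Finite V] (G : SimpleGraph V) :
    {n | ∃ S : Set V, IsIDSet G S ∧ S.ncard = n}.Nonempty := by
  obtain ⟨S, hS⟩ := exists_IDS G
  exact ⟨S.ncard, S, hS, rfl⟩

lemma iNum_mem {V : Type*} [Finite V] (G : SimpleGraph V) :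
    ∃ S : Set V, IsIDSet G S ∧ S.ncard = iNum G :=
  Nat.sInf_mem (setIDS_nonempty G)

end Aux

section Base

instance : DecidableRel baseGraph.Adj := fun a b =>
  decidable_of_iff _ (SimpleGraph.fromRel_adj _ a b).symm

lemma deg_eq_degree {V : Type*} [Fintype V] (G : SimpleGraph V) [DecidableRel G.Adj] (v : V) :
    deg G v = G.degree v := by
  rw [deg, Set.ncard_eq_toFinset_card']
  simp [SimpleGraph.degree, SimpleGraph.neighborFinset]

lemma nDeg_base (j : ℕ) :
    nDeg baseGraph j = ({v : Fin 6 | baseGraph.degree v = j} : Set (Fin 6)).ncard := by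
  unfold nDeg
  congr 1
  ext v
  simp [deg_eq_degree]

lemma weight_base : weight baseGraph = 22 := by
  unfold weight
  rw [nDeg_base, nDeg_base, nDeg_base, nDeg_base]
  rw [Set.ncard_eq_toFinset_card', Set.ncard_eq_toFinset_card',
    Set.ncard_eq_toFinset_card', Set.ncard_eq_toFinset_card']
  decide

lemma mindeg_base : ∀ v, 1 ≤ deg baseGraph v := by
  intro v
  rw [deg_eq_degree]
  revert v; decide

lemma ids_toFinset {V : Type*} [Fintype V] [DecidableEq V] {G : SimpleGraph V} {S : Set V}
    (hS : IsIDSet G S) :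
    ∃ F : Finset V, F.card = S.ncard ∧ (∀ u ∈ F, ∀ v ∈ F, ¬ G.Adj u v) ∧
      ∀ v, v ∉ F → ∃ u ∈ F, G.Adj u v := by
  classical
  refine ⟨S.toFinset, by rw [Set.ncard_eq_toFinset_card'], ?_, ?_⟩
  · intro u hu v hv; exact hS.1 u (Set.mem_toFinset.1 hu) v (Set.mem_toFinset.1 hv)
  · intro v hv
    obtain ⟨u, hu, h⟩ := hS.2 v (fun h => hv (Set.mem_toFinset.2 h))
    exact ⟨u, Set.mem_toFinset.2 hu, h⟩

lemma iNum_base : iNum baseGraph = 3 := by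
  have hmem : (3 : ℕ) ∈ {n | ∃ S : Set (Fin 6), IsIDSet baseGraph S ∧ S.ncard = n} := by
    refine ⟨↑({0, 1, 5} : Finset (Fin 6)), ⟨?_, ?_⟩, by rw [Set.ncard_coe_finset]; decide⟩
    · intro u hu v hv
      rw [Finset.mem_coe] at hu hv
      revert hu hv; revert u v; decide
    · intro v hv
      rw [Finset.mem_coe] at hv
      have : ∃ u ∈ ({0,1,5} : Finset (Fin 6)), baseGraph.Adj u v := by
        revert hv; revert v; decide
      obtain ⟨u, hu, h⟩ := this
      exact ⟨u, Finset.mem_coe.2 hu, h⟩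
  refine le_antisymm (Nat.sInf_le hmem) ?_
  refine le_csInf ⟨3, hmem⟩ ?_
  rintro n ⟨S, hS, rfl⟩
  by_contra hlt
  push_neg at hlt
  obtain ⟨F, hcard, h1, h2⟩ := ids_toFinset hS
  have hF2 : F.card ≤ 2 := by omega
  have : ∀ F : Finset (Fin 6), F.card ≤ 2 →
      ¬ ((∀ u ∈ F, ∀ v ∈ F, ¬ baseGraph.Adj u v) ∧
        ∀ v, v ∉ F → ∃ u ∈ F, baseGraph.Adj u v) := by decide
  exact this F hF2 ⟨h1, h2⟩

end Base

section AddK23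

variable {V : Type*} (G : SimpleGraph V) (v' : V) (t : Fin 3)

lemma adj_lr {a : V} {x : Fin 2 ⊕ Fin 3} :
    (addK23 G v' t).Adj (.inl a) (.inr x) ↔ a = v' ∧ x = .inr t := by
  rw [addK23, fromRel_adj]
  constructor
  · rintro ⟨hne, h | h⟩ <;>
      rcases h with ⟨a', b', h, ha, hb⟩ | ⟨i, j, h1, h2⟩ | ⟨h1, h2⟩ <;> simp_all
  · rintro ⟨rfl, rfl⟩
    exact ⟨by simp, Or.inl (Or.inr (Or.inr ⟨rfl, rfl⟩))⟩

lemma adj_rr {x y : Fin 2 ⊕ Fin 3} :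
    (addK23 G v' t).Adj (.inr x) (.inr y) ↔
      ((∃ i j, x = .inl i ∧ y = .inr j) ∨ (∃ i j, x = .inr j ∧ y = .inl i)) := by
  rw [addK23, fromRel_adj]
  constructor
  · rintro ⟨hne, h | h⟩ <;>
      rcases h with ⟨a', b', h, ha, hb⟩ | ⟨i, j, h1, h2⟩ | ⟨h1, h2⟩
    · simp_all
    · exact Or.inl ⟨i, j, by simpa using h1, by simpa using h2⟩
    · simp_all
    · simp_all
    · exact Or.inr ⟨i, j, by simpa using h2, by simpa using h1⟩
    · simp_all
  · rintro (⟨i, j, rfl, rfl⟩ | ⟨i, j, rfl, rfl⟩)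
    · exact ⟨by simp, Or.inl (Or.inr (Or.inl ⟨i, j, rfl, rfl⟩))⟩
    · exact ⟨by simp, Or.inr (Or.inr (Or.inl ⟨i, j, rfl, rfl⟩))⟩

lemma ns_inl {a : V} (ha : a ≠ v') :
    (addK23 G v' t).neighborSet (.inl a) = Sum.inl '' G.neighborSet a := by
  ext y
  cases y with
  | inl b => simp [SimpleGraph.mem_neighborSet, adj_ll]
  | inr x => simp [SimpleGraph.mem_neighborSet, adj_lr, ha]

lemma ns_inl_v' :
    (addK23 G v' t).neighborSet (.inl v') =
      insert (Sum.inr (Sum.inr t)) (Sum.inl '' G.neighborSet v') := by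
  ext y
  cases y with
  | inl b => simp [SimpleGraph.mem_neighborSet, adj_ll]
  | inr x => simp [SimpleGraph.mem_neighborSet, adj_lr, eq_comm]

lemma ns_inr_inl (i : Fin 2) :
    (addK23 G v' t).neighborSet (.inr (.inl i)) =
      Sum.inr '' (Sum.inr '' (Set.univ : Set (Fin 3))) := by
  ext y
  cases y with
  | inl b =>
    simp only [SimpleGraph.mem_neighborSet]
    rw [(addK23 G v' t).adj_comm]
    simp [adj_lr]
  | inr x => simp [SimpleGraph.mem_neighborSet, adj_rr]; cases x <;> simp

lemma ns_inr_inr (j : Fin 3) :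
    (addK23 G v' t).neighborSet (.inr (.inr j)) =
      (if j = t then {Sum.inl v'} else ∅) ∪
        {Sum.inr (Sum.inl 0), Sum.inr (Sum.inl 1)} := by
  ext y
  cases y with
  | inl b =>
    simp only [SimpleGraph.mem_neighborSet]
    rw [(addK23 G v' t).adj_comm]
    simp [adj_lr]
    by_cases hj : j = t <;> simp [hj, eq_comm]
  | inr x =>
    simp only [SimpleGraph.mem_neighborSet, adj_rr]
    cases x with
    | inl i => by_cases hj : j = t <;> fin_cases i <;> simp [hj]
    | inr j' => by_cases hj : j = t <;> simp [hj]

lemma deg_addK23_inl_v' [Finite V] :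
    deg (addK23 G v' t) (.inl v') = deg G v' + 1 := by
  rw [deg, ns_inl_v', Set.ncard_insert_of_notMem (by simp),
    Set.ncard_image_of_injective _ Sum.inl_injective, deg]

lemma deg_addK23_inl_ne [Finite V] {a : V} (ha : a ≠ v') :
    deg (addK23 G v' t) (.inl a) = deg G a := by
  rw [deg, ns_inl G v' t ha, Set.ncard_image_of_injective _ Sum.inl_injective, deg]

lemma deg_addK23_inr_inl (i : Fin 2) :
    deg (addK23 G v' t) (.inr (.inl i)) = 3 := by
  rw [deg, ns_inr_inl,
    Set.ncard_image_of_injective _ Sum.inr_injective,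
    Set.ncard_image_of_injective _ Sum.inr_injective]
  simp [Set.ncard_univ]

lemma deg_addK23_inr_inr (j : Fin 3) :
    deg (addK23 G v' t) (.inr (.inr j)) = if j = t then 3 else 2 := by
  rw [deg, ns_inr_inr]
  by_cases hj : j = t
  · rw [if_pos hj, if_pos hj]
    rw [Set.singleton_union, Set.ncard_insert_of_notMem (by simp),
      Set.ncard_pair (by simp)]
  · rw [if_neg hj, if_neg hj, Set.empty_union, Set.ncard_pair (by simp)]

lemma ncard_setOf_sum {A B : Type*} [Finite A] [Finite B] (P : A ⊕ B → Prop) :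
    {s | P s}.ncard = {a | P (.inl a)}.ncard + {x | P (.inr x)}.ncard := by
  have hset : {s | P s} = Sum.inl '' {a | P (.inl a)} ∪ Sum.inr '' {x | P (.inr x)} := by
    ext s; cases s <;> simp
  rw [hset, Set.ncard_union_eq ?disj (Set.toFinite _) (Set.toFinite _),
    Set.ncard_image_of_injective _ Sum.inl_injective,
    Set.ncard_image_of_injective _ Sum.inr_injective]
  case disj =>
    rw [Set.disjoint_left]
    rintro s ⟨a, _, rfl⟩ ⟨x, _, h⟩
    exact Sum.inl_ne_inr h.symm

lemma ncard_ne_fin3 (u : Fin 3) : ({j : Fin 3 | j ≠ u}).ncard = 2 := by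
  fin_cases u <;> · rw [Set.ncard_eq_toFinset_card']; decide

lemma weight_addK23 [Finite V] (hmin : ∀ v, 1 ≤ deg G v) (hv' : deg G v' ≤ 2) :
    weight (addK23 G v' t) = weight G + 16 := by
  classical
  have hsplit : ∀ j, nDeg (addK23 G v' t) j =
      {a : V | deg (addK23 G v' t) (.inl a) = j}.ncard +
      {x : Fin 2 ⊕ Fin 3 | deg (addK23 G v' t) (.inr x) = j}.ncard := by
    intro j; rw [nDeg]; exact ncard_setOf_sum _
  have hY : ∀ j : ℕ, {x : Fin 2 ⊕ Fin 3 | deg (addK23 G v' t) (.inr x) = j} =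
      (if j = 3 then {Sum.inl 0, Sum.inl 1, Sum.inr t} else
       if j = 2 then Sum.inr '' {j' : Fin 3 | j' ≠ t} else ∅) := by
    intro j
    ext x
    rcases x with i | j'
    · simp only [Set.mem_setOf_eq, deg_addK23_inr_inl]
      by_cases h3 : j = 3 <;> by_cases h2 : j = 2 <;> fin_cases i <;> simp_all <;> omega
    · simp only [Set.mem_setOf_eq, deg_addK23_inr_inr]
      by_cases hjt : j' = t <;> by_cases h3 : j = 3 <;> by_cases h2 : j = 2 <;>
        simp_all <;> omega
  have hY0 : {x : Fin 2 ⊕ Fin 3 | deg (addK23 G v' t) (.inr x) = 0}.ncard = 0 := by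
    rw [hY]; simp
  have hY1 : {x : Fin 2 ⊕ Fin 3 | deg (addK23 G v' t) (.inr x) = 1}.ncard = 0 := by
    rw [hY]; simp
  have hY2 : {x : Fin 2 ⊕ Fin 3 | deg (addK23 G v' t) (.inr x) = 2}.ncard = 2 := by
    rw [hY]
    norm_num
    rw [Set.ncard_image_of_injective _ Sum.inr_injective, ncard_ne_fin3]
  have hY3 : {x : Fin 2 ⊕ Fin 3 | deg (addK23 G v' t) (.inr x) = 3}.ncard = 3 := by
    rw [hY]
    norm_num
    rw [Set.ncard_insert_of_notMem (by simp), Set.ncard_pair (by simp)]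
  have hd1 : 1 ≤ deg G v' := hmin v'
  have hn0 : nDeg G 0 = 0 := by
    rw [nDeg]
    have : {a : V | deg G a = 0} = ∅ := by
      ext a; have := hmin a; simp; omega
    rw [this, Set.ncard_empty]
  have hA0 : {a : V | deg (addK23 G v' t) (.inl a) = 0}.ncard = 0 := by
    have : {a : V | deg (addK23 G v' t) (.inl a) = 0} = ∅ := by
      ext a
      by_cases ha : a = v'
      · subst ha; rw [Set.mem_setOf_eq, deg_addK23_inl_v']; simp
      · rw [Set.mem_setOf_eq, deg_addK23_inl_ne G v' t ha]
        have := hmin a; simp; omega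
    rw [this, Set.ncard_empty]
  interval_cases hdv : (deg G v')
  · -- deg G v' = 1
    have hA1 : nDeg G 1 = {a : V | deg (addK23 G v' t) (.inl a) = 1}.ncard + 1 := by
      have hset : {a : V | deg G a = 1} =
          insert v' {a : V | deg (addK23 G v' t) (.inl a) = 1} := by
        ext a
        by_cases ha : a = v'
        · subst ha; simp [hdv]
        · rw [Set.mem_insert_iff, Set.mem_setOf_eq, Set.mem_setOf_eq,
            deg_addK23_inl_ne G v' t ha]
          tauto
      have hv1 : v' ∉ {a : V | deg (addK23 G v' t) (.inl a) = 1} := by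
        rw [Set.mem_setOf_eq, deg_addK23_inl_v', hdv]; omega
      rw [nDeg, hset, Set.ncard_insert_of_notMem hv1]
    have hA2 : {a : V | deg (addK23 G v' t) (.inl a) = 2}.ncard = nDeg G 2 + 1 := by
      have hset : {a : V | deg (addK23 G v' t) (.inl a) = 2} =
          insert v' {a : V | deg G a = 2} := by
        ext a
        by_cases ha : a = v'
        · subst ha; rw [Set.mem_setOf_eq, deg_addK23_inl_v', hdv]; simp
        · rw [Set.mem_insert_iff, Set.mem_setOf_eq, Set.mem_setOf_eq,
            deg_addK23_inl_ne G v' t ha]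
          tauto
      have hv2 : v' ∉ {a : V | deg G a = 2} := by rw [Set.mem_setOf_eq, hdv]; omega
      rw [hset, Set.ncard_insert_of_notMem hv2, nDeg]
    have hA3 : {a : V | deg (addK23 G v' t) (.inl a) = 3}.ncard = nDeg G 3 := by
      have hset : {a : V | deg (addK23 G v' t) (.inl a) = 3} = {a : V | deg G a = 3} := by
        ext a
        by_cases ha : a = v'
        · subst ha
          rw [Set.mem_setOf_eq, Set.mem_setOf_eq, deg_addK23_inl_v', hdv]
          omega
        · rw [Set.mem_setOf_eq, Set.mem_setOf_eq, deg_addK23_inl_ne G v' t ha]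
      rw [hset, nDeg]
    unfold weight
    rw [hsplit, hsplit, hsplit, hsplit, hY0, hY1, hY2, hY3]
    omega
  · -- deg G v' = 2
    have hA1 : {a : V | deg (addK23 G v' t) (.inl a) = 1}.ncard = nDeg G 1 := by
      have hset : {a : V | deg (addK23 G v' t) (.inl a) = 1} = {a : V | deg G a = 1} := by
        ext a
        by_cases ha : a = v'
        · subst ha
          rw [Set.mem_setOf_eq, Set.mem_setOf_eq, deg_addK23_inl_v', hdv]
          omega
        · rw [Set.mem_setOf_eq, Set.mem_setOf_eq, deg_addK23_inl_ne G v' t ha]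
      rw [hset, nDeg]
    have hA2 : nDeg G 2 = {a : V | deg (addK23 G v' t) (.inl a) = 2}.ncard + 1 := by
      have hset : {a : V | deg G a = 2} =
          insert v' {a : V | deg (addK23 G v' t) (.inl a) = 2} := by
        ext a
        by_cases ha : a = v'
        · subst ha; simp [hdv]
        · rw [Set.mem_insert_iff, Set.mem_setOf_eq, Set.mem_setOf_eq,
            deg_addK23_inl_ne G v' t ha]
          tauto
      have hv2 : v' ∉ {a : V | deg (addK23 G v' t) (.inl a) = 2} := by
        rw [Set.mem_setOf_eq, deg_addK23_inl_v', hdv]; omega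
      rw [nDeg, hset, Set.ncard_insert_of_notMem hv2]
    have hA3 : {a : V | deg (addK23 G v' t) (.inl a) = 3}.ncard = nDeg G 3 + 1 := by
      have hset : {a : V | deg (addK23 G v' t) (.inl a) = 3} =
          insert v' {a : V | deg G a = 3} := by
        ext a
        by_cases ha : a = v'
        · subst ha; rw [Set.mem_setOf_eq, deg_addK23_inl_v', hdv]; simp
        · rw [Set.mem_insert_iff, Set.mem_setOf_eq, Set.mem_setOf_eq,
            deg_addK23_inl_ne G v' t ha]
          tauto
      have hv3 : v' ∉ {a : V | deg G a = 3} := by rw [Set.mem_setOf_eq, hdv]; omega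
      rw [hset, Set.ncard_insert_of_notMem hv3, nDeg]
    unfold weight
    rw [hsplit, hsplit, hsplit, hsplit, hY0, hY1, hY2, hY3]
    omega

lemma adj_rl {a : V} {x : Fin 2 ⊕ Fin 3} :
    (addK23 G v' t).Adj (.inr x) (.inl a) ↔ a = v' ∧ x = .inr t := by
  rw [(addK23 G v' t).adj_comm]; exact adj_lr G v' t

lemma iNum_addK23 [Finite V] :
    iNum (addK23 G v' t) = iNum G + 2 := by
  classical
  refine le_antisymm ?upper ?lower
  case upper =>
    obtain ⟨S, hS, hcard⟩ := iNum_mem G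
    set S' : Set (V ⊕ (Fin 2 ⊕ Fin 3)) :=
      Sum.inl '' S ∪ {Sum.inr (Sum.inl 0), Sum.inr (Sum.inl 1)} with hS'def
    have hmemS' : ∀ w, w ∈ S' ↔ ((∃ a ∈ S, Sum.inl a = w) ∨
        w = Sum.inr (Sum.inl 0) ∨ w = Sum.inr (Sum.inl 1)) := by
      intro w
      simp only [hS'def, Set.mem_union, Set.mem_image, Set.mem_insert_iff,
        Set.mem_singleton_iff]
    have hIDS : IsIDSet (addK23 G v' t) S' := by
      constructor
      · intro u hu w hw hadj
        rw [hmemS'] at hu hw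
        rcases hu with ⟨a, ha, rfl⟩ | rfl | rfl <;>
          rcases hw with ⟨b, hb, rfl⟩ | rfl | rfl
        · exact hS.1 a ha b hb ((adj_ll G v' t).1 hadj)
        · obtain ⟨-, h⟩ := (adj_lr G v' t).1 hadj; simp at h
        · obtain ⟨-, h⟩ := (adj_lr G v' t).1 hadj; simp at h
        · obtain ⟨-, h⟩ := (adj_rl G v' t).1 hadj; simp at h
        · exact (addK23 G v' t).irrefl hadj
        · rcases (adj_rr G v' t).1 hadj with ⟨i, j, h1, h2⟩ | ⟨i, j, h1, h2⟩ <;>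
            simp at h1 h2
        · obtain ⟨-, h⟩ := (adj_rl G v' t).1 hadj; simp at h
        · rcases (adj_rr G v' t).1 hadj with ⟨i, j, h1, h2⟩ | ⟨i, j, h1, h2⟩ <;>
            simp at h1 h2
        · exact (addK23 G v' t).irrefl hadj
      · intro w hw
        rcases w with a | x
        · have ha : a ∉ S := fun h => hw ((hmemS' _).2 (Or.inl ⟨a, h, rfl⟩))
          obtain ⟨b, hb, hadj⟩ := hS.2 a ha
          exact ⟨Sum.inl b, (hmemS' _).2 (Or.inl ⟨b, hb, rfl⟩),
            (adj_ll G v' t).2 hadj⟩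
        · rcases x with i | j
          · exfalso
            apply hw
            rw [hmemS']
            fin_cases i
            · exact Or.inr (Or.inl rfl)
            · exact Or.inr (Or.inr rfl)
          · exact ⟨Sum.inr (Sum.inl 0), (hmemS' _).2 (Or.inr (Or.inl rfl)),
              (adj_rr G v' t).2 (Or.inl ⟨0, j, rfl, rfl⟩)⟩
    have hcard' : S'.ncard = S.ncard + 2 := by
      rw [hS'def, Set.ncard_union_eq ?disj (Set.toFinite _) (Set.toFinite _),
        Set.ncard_image_of_injective _ Sum.inl_injective,
        Set.ncard_pair (by simp)]
      case disj =>
        rw [Set.disjoint_left]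
        rintro w ⟨a, -, rfl⟩ hmem
        rcases hmem with h | h <;> simp at h
    exact Nat.sInf_le ⟨S', hIDS, by rw [hcard', hcard]⟩
  case lower =>
    refine le_csInf (setIDS_nonempty _) ?_
    rintro n ⟨S', hS', rfl⟩
    set S : Set V := Sum.inl ⁻¹' S' with hSdef
    set T : Set (Fin 2 ⊕ Fin 3) := Sum.inr ⁻¹' S' with hTdef
    have hsum : S'.ncard = S.ncard + T.ncard := by
      conv_lhs => rw [← Set.setOf_mem_eq (s := S')]
      exact ncard_setOf_sum _
    have hindS : ∀ a ∈ S, ∀ b ∈ S, ¬ G.Adj a b := by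
      intro a ha b hb hadj
      exact hS'.1 _ ha _ hb ((adj_ll G v' t).2 hadj)
    have htransfer : ∀ a, a ∉ S →
        (∃ b ∈ S, G.Adj b a) ∨ (a = v' ∧ Sum.inr (Sum.inr t) ∈ S') := by
      intro a ha
      obtain ⟨u, hu, hadj⟩ := hS'.2 (Sum.inl a) ha
      rcases u with b | x
      · exact Or.inl ⟨b, hu, (adj_ll G v' t).1 hadj⟩
      · obtain ⟨rfl, rfl⟩ := (adj_rl G v' t).1 hadj
        exact Or.inr ⟨rfl, hu⟩
    have key : ∃ S₀ : Set V, IsIDSet G S₀ ∧ S₀.ncard + 2 ≤ S'.ncard := by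
      by_cases hB : ∃ j, Sum.inr (Sum.inr j) ∈ S'
      · obtain ⟨j₀, hj₀⟩ := hB
        have hnoA : ∀ i : Fin 2, Sum.inr (Sum.inl i) ∉ S' := by
          intro i hi
          exact hS'.1 _ hi _ hj₀ ((adj_rr G v' t).2 (Or.inl ⟨i, j₀, rfl, rfl⟩))
        have hBall : ∀ j, Sum.inr (Sum.inr j) ∈ S' ∨ (j = t ∧ Sum.inl v' ∈ S') := by
          intro j
          by_cases hj : Sum.inr (Sum.inr j) ∈ S'
          · exact Or.inl hj
          · obtain ⟨u, hu, hadj⟩ := hS'.2 (Sum.inr (Sum.inr j)) hj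
            rcases u with b | x
            · obtain ⟨rfl, hx⟩ := (adj_lr G v' t).1 hadj
              have hjt : j = t := by simpa using hx
              exact Or.inr ⟨hjt, hu⟩
            · rcases (adj_rr G v' t).1 hadj with ⟨i, j', rfl, -⟩ | ⟨i, j', -, h⟩
              · exact absurd hu (hnoA i)
              · exact absurd h (by simp)
        by_cases hall : ∀ j, Sum.inr (Sum.inr j) ∈ S'
        · have hT3 : 3 ≤ T.ncard := by
            have hsub : Sum.inr '' (Set.univ : Set (Fin 3)) ⊆ T := by
              rintro x ⟨j, -, rfl⟩
              exact hall j
            calc 3 = (Sum.inr '' (Set.univ : Set (Fin 3))).ncard := by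
                    rw [Set.ncard_image_of_injective _ Sum.inr_injective]
                    simp [Set.ncard_univ]
              _ ≤ T.ncard := Set.ncard_le_ncard hsub (Set.toFinite _)
          have hv'notin : v' ∉ S := by
            intro h
            exact hS'.1 _ h _ (hall t) ((adj_lr G v' t).2 ⟨rfl, rfl⟩)
          by_cases hnb : ∃ b ∈ S, G.Adj b v'
          · refine ⟨S, ⟨hindS, ?_⟩, by omega⟩
            intro a ha
            rcases htransfer a ha with ⟨b, hb, hadj⟩ | ⟨rfl, -⟩
            · exact ⟨b, hb, hadj⟩
            · exact hnb
          · push_neg at hnb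
            refine ⟨insert v' S, ⟨?_, ?_⟩, ?_⟩
            · intro a ha b hb hadj
              rcases Set.mem_insert_iff.1 ha with h1 | h1 <;>
                rcases Set.mem_insert_iff.1 hb with h2 | h2
              · subst h1; subst h2; exact G.irrefl hadj
              · subst h1; exact hnb b h2 (G.adj_symm hadj)
              · subst h2; exact hnb a h1 hadj
              · exact hindS a h1 b h2 hadj
            · intro a ha
              rw [Set.mem_insert_iff] at ha
              push_neg at ha
              rcases htransfer a ha.2 with ⟨b, hb, hadj⟩ | ⟨rfl, -⟩
              · exact ⟨b, Set.mem_insert_of_mem _ hb, hadj⟩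
              · exact absurd rfl ha.1
            · have := Set.ncard_insert_le v' S
              omega
        · push_neg at hall
          obtain ⟨j₁, hj₁⟩ := hall
          obtain ⟨hjt, hv'S'⟩ := (hBall j₁).resolve_left hj₁
          have hv'S : v' ∈ S := hv'S'
          have hBj : ∀ j, j ≠ t → Sum.inr (Sum.inr j) ∈ S' := by
            intro j hj
            exact (hBall j).resolve_right (fun h => hj h.1)
          have hT2 : 2 ≤ T.ncard := by
            have hsub : Sum.inr '' {j : Fin 3 | j ≠ t} ⊆ T := by
              rintro x ⟨j, hj, rfl⟩
              exact hBj j hj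
            calc 2 = (Sum.inr '' {j : Fin 3 | j ≠ t}).ncard := by
                    rw [Set.ncard_image_of_injective _ Sum.inr_injective, ncard_ne_fin3]
              _ ≤ T.ncard := Set.ncard_le_ncard hsub (Set.toFinite _)
          refine ⟨S, ⟨hindS, ?_⟩, by omega⟩
          intro a ha
          rcases htransfer a ha with ⟨b, hb, hadj⟩ | ⟨rfl, -⟩
          · exact ⟨b, hb, hadj⟩
          · exact absurd hv'S ha
      · push_neg at hB
        have hA : ∀ i : Fin 2, Sum.inr (Sum.inl i) ∈ S' := by
          intro i
          by_cases hi : Sum.inr (Sum.inl i) ∈ S'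
          · exact hi
          · exfalso
            obtain ⟨u, hu, hadj⟩ := hS'.2 (Sum.inr (Sum.inl i)) hi
            rcases u with b | x
            · obtain ⟨-, h⟩ := (adj_lr G v' t).1 hadj
              simp at h
            · rcases (adj_rr G v' t).1 hadj with ⟨i', j', -, h⟩ | ⟨i', j', rfl, -⟩
              · simp at h
              · exact hB j' hu
        have hT2 : 2 ≤ T.ncard := by
          have hsub : {Sum.inl 0, Sum.inl 1} ⊆ T := by
            rintro x (rfl | rfl)
            · exact hA 0
            · exact hA 1
          calc 2 = ({Sum.inl 0, Sum.inl 1} : Set (Fin 2 ⊕ Fin 3)).ncard := by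
                  rw [Set.ncard_pair (by simp)]
            _ ≤ T.ncard := Set.ncard_le_ncard hsub (Set.toFinite _)
        refine ⟨S, ⟨hindS, ?_⟩, by omega⟩
        intro a ha
        rcases htransfer a ha with ⟨b, hb, hadj⟩ | ⟨rfl, hrt⟩
        · exact ⟨b, hb, hadj⟩
        · exact absurd hrt (hB t)
    obtain ⟨S₀, hS₀, hle⟩ := key
    have : iNum G ≤ S₀.ncard := Nat.sInf_le ⟨S₀, hS₀, rfl⟩
    omega

end AddK23

lemma familyBk_facts : ∀ {k : ℕ} {V : Type} {G : SimpleGraph V}, FamilyBk k G →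
    Finite V ∧ (∀ v, 1 ≤ deg G v) ∧ iNum G = 2 * k + 1 ∧ weight G = 16 * k + 6 := by
  intro k V G hG
  induction hG with
  | base =>
    exact ⟨inferInstance, mindeg_base, by rw [iNum_base], by rw [weight_base]⟩
  | @extend k V G hG v' hv' t ih =>
    obtain ⟨hfin, hmin, hiNum, hw⟩ := ih
    refine ⟨inferInstance, ?_, ?_, ?_⟩
    · rintro (a | x)
      · by_cases ha : a = v'
        · subst ha; rw [deg_addK23_inl_v']; omega
        · rw [deg_addK23_inl_ne G v' t ha]; exact hmin a
      · rcases x with i | j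
        · rw [deg_addK23_inr_inl]; omega
        · rw [deg_addK23_inr_inr]; split <;> omega
    · rw [iNum_addK23, hiNum]; ring
    · rw [weight_addK23 G v' t hmin hv', hw]; ring
  | @iso k V W G H e hG ih =>
    obtain ⟨hfin, hmin, hiNum, hw⟩ := ih
    refine ⟨Finite.of_equiv V e.toEquiv, ?_, ?_, ?_⟩
    · intro w
      have := deg_iso e (e.symm w)
      rw [e.apply_symm_apply] at this
      rw [this]; exact hmin _
    · rw [iNum_iso e, hiNum]
    · rw [weight_iso e, hw]

/-- **Proposition cB(a).** If `G ∈ 𝓑` is constructed from the base graph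
by `k − 1` applications of the operation `O₁` (`k ≥ 1`), then `i(G) = 2k + 1`,
`w(G) = 16k + 6`, and consequently `8·i(G) = w(G) + 2`. -/
theorem statement9 {V : Type} (G : SimpleGraph V) (k : ℕ) (hk : 1 ≤ k)
    (hG : FamilyBk k G) :
    iNum G = 2 * k + 1 ∧ weight G = 16 * k + 6 ∧ 8 * iNum G = weight G + 2 := by
  obtain ⟨_, _, h1, h2⟩ := familyBk_facts hG
  exact ⟨h1, h2, by rw [h1, h2]; ring⟩

end PaperIndepDom
end
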